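/- Under Assumption 1, for all k, ℓ ∈ ℕ₀ one has P(S₊ⁱ = k, S₋ⁱ = ℓ) = P(S₊ⁱ = k + ℓ) − P(S₊ⁱ = k + ℓ + 1), and the same identity holds with S₊ⁱ replaced by S₋ⁱ on the right-hand side. -/

import Mathlib

open MeasureTheory Filter Set ENNReal

noncomputable section

/-- The cluster `C(ω) = {t : I_t(ω) = 1}` of a binary process. -/
def clusterSet {Ω : Type*} (I : ℤ → Ω → Bool) (ω : Ω) : Set ℤ :=
  {t : ℤ | I t ω = true}

/-- Inspected cluster size `Sⁱ(ω) = Σ_{t ∈ ℤ} I_t(ω) ∈ ℕ ∪ {∞}`. -/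
def SiFn {Ω : Type*} (I : ℤ → Ω → Bool) (ω : Ω) : ℕ∞ :=
  {t : ℤ | I t ω = true}.encard

/-- Forward inspected cluster size `S₊ⁱ(ω) = Σ_{t ≥ 1} I_t(ω) ∈ ℕ₀ ∪ {∞}`. -/
def SplusFn {Ω : Type*} (I : ℤ → Ω → Bool) (ω : Ω) : ℕ∞ :=
  {t : ℤ | 0 < t ∧ I t ω = true}.encard

/-- Backward inspected cluster size `S₋ⁱ(ω) = Σ_{t ≤ -1} I_t(ω) ∈ ℕ₀ ∪ {∞}`. -/
def SminusFn {Ω : Type*} (I : ℤ → Ω → Bool) (ω : Ω) : ℕ∞ :=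
  {t : ℤ | t < 0 ∧ I t ω = true}.encard


abbrev Conf := ℤ → Bool

/-- elementary cylinder -/
def cylE (F : Finset ℤ) (ε : ℤ → Bool) : Set Conf := {x | ∀ t ∈ F, x t = ε t}

lemma measurableSet_cylE (F : Finset ℤ) (ε : ℤ → Bool) : MeasurableSet (cylE F ε) := by
  have : cylE F ε = ⋂ t ∈ (F : Set ℤ), {x : Conf | x t = ε t} := by
    ext x; simp [cylE]
  rw [this]
  refine MeasurableSet.biInter (F : Set ℤ).to_countable (fun t _ => ?_)
  show MeasurableSet ((fun x : Conf => x t) ⁻¹' {ε t})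
  exact (measurable_pi_apply t) (measurableSet_singleton (ε t))

def cylFam : Set (Set Conf) := {A | ∃ F ε, A = cylE F ε}

lemma isPiSystem_cylFam : IsPiSystem cylFam := by
  rintro _ ⟨F, ε, rfl⟩ _ ⟨F', ε', rfl⟩ hne
  classical
  refine ⟨F ∪ F', fun t => if t ∈ F then ε t else ε' t, ?_⟩
  obtain ⟨y, hy1, hy2⟩ := hne
  ext x
  constructor
  · rintro ⟨h1, h2⟩ t ht
    rcases Finset.mem_union.mp ht with h | h
    · simp [h1 t h, h]
    · by_cases hF : t ∈ F
      · simp [h1 t hF, hF]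
      · simp [h2 t h, hF]
  · intro h
    constructor
    · intro t ht
      have := h t (Finset.mem_union_left _ ht)
      simpa [ht] using this
    · intro t ht
      have := h t (Finset.mem_union_right _ ht)
      by_cases hF : t ∈ F
      · simp only [if_pos hF] at this
        rw [this, ← hy1 t hF, hy2 t ht]
      · simpa [hF] using this

lemma generateFrom_cylFam :
    (by infer_instance : MeasurableSpace Conf) = MeasurableSpace.generateFrom cylFam := by
  apply le_antisymm
  · show MeasurableSpace.pi ≤ _
    refine iSup_le fun t => ?_
    rw [MeasurableSpace.comap_le_iff_le_map]
    intro s _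
    -- s : Set Bool; show preimage measurable in generateFrom
    show MeasurableSet[MeasurableSpace.generateFrom cylFam] ((fun x : Conf => x t) ⁻¹' s)
    have hb : ∀ (b : Bool), MeasurableSet[MeasurableSpace.generateFrom cylFam]
        ((fun x : Conf => x t) ⁻¹' {b}) := by
      intro b
      apply MeasurableSpace.measurableSet_generateFrom
      refine ⟨{t}, fun _ => b, ?_⟩
      ext x; simp [cylE]
    have : s = ⋃ b ∈ s, {b} := by simp
    rw [this, preimage_iUnion₂]
    exact MeasurableSet.biUnion (Set.to_countable _) (fun b _ => hb b)
  · refine MeasurableSpace.generateFrom_le ?_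
    rintro _ ⟨F, ε, rfl⟩
    exact measurableSet_cylE F ε

/-- shift: `shf k x t = x (t - k)`. -/
def shf (k : ℤ) (x : Conf) : Conf := fun t => x (t - k)

lemma measurable_shf (k : ℤ) : Measurable (shf k) :=
  measurable_pi_lambda _ (fun t => measurable_pi_apply (t - k))

lemma shf_preimage_cylE (k : ℤ) (F : Finset ℤ) (ε : ℤ → Bool) :
    shf k ⁻¹' cylE F ε = cylE (F.image (· - k)) (fun s => ε (s + k)) := by
  ext x
  simp only [mem_preimage, cylE, mem_setOf_eq, Finset.mem_image, shf]
  constructor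
  · rintro h s ⟨t, ht, rfl⟩
    simpa using h t ht
  · intro h t ht
    have := h (t - k) ⟨t, ht, rfl⟩
    simpa using this

/-- counting function -/
def cnt (A : Set ℤ) (x : Conf) : ℕ∞ := {t | t ∈ A ∧ x t = true}.encard

lemma measurableSet_cnt_eq (A : Set ℤ) (c : ℕ∞) :
    MeasurableSet {x : Conf | cnt A x = c} := by
  classical
  have hfin : ∀ (n : ℕ), MeasurableSet {x : Conf | cnt A x = (n : ℕ∞)} := by
    intro n
    have : {x : Conf | cnt A x = (n : ℕ∞)}
        = ⋃ (T : Finset ℤ), ⋃ (_ : T.card = n ∧ (T : Set ℤ) ⊆ A),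
            ⋂ t ∈ A, {x : Conf | x t = decide (t ∈ T)} := by
      ext x
      simp only [mem_setOf_eq, mem_iUnion, mem_iInter]
      constructor
      · intro h
        rw [cnt] at h
        have hfin : {t | t ∈ A ∧ x t = true}.Finite := by
          rw [← Set.encard_lt_top_iff, h]; exact lt_top_iff_ne_top.mpr (by simp)
        refine ⟨hfin.toFinset, ⟨?_, ?_⟩, ?_⟩
        · have h2 := hfin.encard_eq_coe_toFinset_card
          rw [h] at h2
          exact_mod_cast h2.symm
        · intro t ht; simp only [Set.Finite.coe_toFinset] at ht; exact ht.1
        · intro t ht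
          by_cases hx : x t = true
          · have htm : t ∈ hfin.toFinset := by
              rw [Set.Finite.mem_toFinset]; exact ⟨ht, hx⟩
            simp [hx, htm]
          · have hx' : x t = false := by simpa using hx
            have htm : t ∉ hfin.toFinset := by
              rw [Set.Finite.mem_toFinset]; rintro ⟨-, h2⟩; exact hx h2
            simp [hx', htm]
      · rintro ⟨T, ⟨hcard, hsub⟩, h⟩
        have hset : {t | t ∈ A ∧ x t = true} = (T : Set ℤ) := by
          ext t
          simp only [mem_setOf_eq, Finset.mem_coe]
          constructor
          · rintro ⟨ht, hx⟩
            have h2 := h t ht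
            rw [hx] at h2
            exact of_decide_eq_true h2.symm
          · intro ht
            refine ⟨hsub ht, ?_⟩
            have h2 := h t (hsub ht)
            rw [h2, decide_eq_true_eq]
            exact ht
        rw [cnt, hset]
        simp [hcard]
    rw [this]
    refine MeasurableSet.iUnion fun T => MeasurableSet.iUnion fun _ => ?_
    exact MeasurableSet.biInter (A.to_countable)
      (fun t _ => (measurable_pi_apply t) (measurableSet_singleton _))
  cases c with
  | top =>
    have : {x : Conf | cnt A x = ⊤} = (⋃ (n : ℕ), {x : Conf | cnt A x = (n : ℕ∞)})ᶜ := by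
      ext x
      simp only [mem_compl_iff, mem_iUnion, mem_setOf_eq, not_exists]
      constructor
      · intro h n hn; rw [h] at hn; exact (by simp : ((n:ℕ∞) ≠ ⊤)) hn.symm
      · intro h
        cases hc : cnt A x with
        | top => rfl
        | coe n => exact absurd hc (h n)
    rw [this]
    exact (MeasurableSet.iUnion hfin).compl
  | coe n => exact hfin n


lemma measurableSet_coordEq (t : ℤ) (v : Bool) : MeasurableSet {x : Conf | x t = v} := by
  show MeasurableSet ((fun x : Conf => x t) ⁻¹' {v})
  exact measurable_pi_apply t (measurableSet_singleton v)

lemma measure_inter_ae {α : Type*} [MeasurableSpace α] (μ : Measure α) {T : Set α}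
    (hT : μ Tᶜ = 0) (S : Set α) : μ (S ∩ T) = μ S := by
  refine le_antisymm (measure_mono inter_subset_left) ?_
  calc μ S = μ ((S ∩ T) ∪ (S ∩ Tᶜ)) := by rw [Set.inter_union_compl]
  _ ≤ μ (S ∩ T) + μ (S ∩ Tᶜ) := measure_union_le _ _
  _ ≤ μ (S ∩ T) + μ Tᶜ := add_le_add_right (measure_mono inter_subset_right) _
  _ = μ (S ∩ T) := by rw [hT, add_zero]

lemma enat_succ_eq_iff {b c : ℕ∞} (hb : b ≠ 0) : c + 1 = b ↔ c = b - 1 := by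
  cases b with
  | top =>
    rw [ENat.top_sub_one]
    constructor
    · intro h
      rcases WithTop.add_eq_top.mp h with h | h
      · exact h
      · exact absurd h ENat.one_ne_top
    · rintro rfl
      rfl
  | coe m =>
    cases m with
    | zero => exact absurd rfl hb
    | succ m =>
      have h1 : ((m+1:ℕ):ℕ∞) - 1 = (m:ℕ∞) := by
        rw [show (1:ℕ∞) = ((1:ℕ):ℕ∞) from rfl, ← ENat.coe_sub]
        norm_num
      rw [h1]
      cases c with
      | top =>
        constructor
        · intro h; rw [top_add] at h; exact absurd h.symm (ENat.coe_ne_top _)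
        · intro h; exact absurd h (by simp)
      | coe cc =>
        constructor
        · intro h
          norm_cast at h ⊢
          omega
        · intro h
          norm_cast at h ⊢
          omega

lemma cnt_shf (A : Set ℤ) (k : ℤ) (x : Conf) :
    cnt A (shf k x) = cnt ((fun t => t - k) '' A) x := by
  rw [cnt, cnt]
  have hset : {t | t ∈ (fun t => t - k) '' A ∧ x t = true}
      = (fun t => t - k) '' {t | t ∈ A ∧ shf k x t = true} := by
    ext s
    constructor
    · rintro ⟨⟨t, ht, rfl⟩, hx⟩
      exact ⟨t, ⟨ht, by simpa [shf] using hx⟩, rfl⟩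
    · rintro ⟨t, ⟨ht, hx⟩, rfl⟩
      exact ⟨⟨t, ht, rfl⟩, by simpa [shf] using hx⟩
  rw [hset]
  have hinj : Function.Injective (fun t : ℤ => t - k) := fun t₁ t₂ h => by
    simpa [sub_left_inj] using h
  exact (hinj.encard_image _).symm

/-! ### L1 machinery -/

def Aset (a b : ℕ∞) (n : ℕ) : Set Conf :=
  {x | cnt (Ioi 0) x = a ∧ cnt (Iio 0) x = b ∧ ∀ i : ℤ, -((n:ℤ)+1) < i → i < 0 → x i = false}

def Cset (a b : ℕ∞) (n : ℕ) : Set Conf :=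
  Aset a b n ∩ {x | x (-((n:ℤ)+1)) = true}

def Dset (a b : ℕ∞) (n : ℕ) : Set Conf :=
  {x | cnt (Ioi ((n:ℤ)+1)) x = a ∧ cnt (Iio ((n:ℤ)+1)) x = b ∧
       ∀ s : ℤ, 0 < s → s < (n:ℤ)+1 → x s = false} ∩ {x | x ((n:ℤ)+1) = true}

lemma measurableSet_Aset (a b : ℕ∞) (n : ℕ) : MeasurableSet (Aset a b n) := by
  have h : Aset a b n = {x | cnt (Ioi 0) x = a} ∩ ({x | cnt (Iio 0) x = b} ∩
      ⋂ (i : ℤ), ⋂ (_ : -((n:ℤ)+1) < i), ⋂ (_ : i < 0), {x : Conf | x i = false}) := by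
    ext x
    simp only [Aset, mem_setOf_eq, mem_inter_iff, mem_iInter]
  rw [h]
  exact (measurableSet_cnt_eq _ _).inter ((measurableSet_cnt_eq _ _).inter
    (MeasurableSet.iInter fun i => MeasurableSet.iInter fun _ => MeasurableSet.iInter fun _ =>
      measurableSet_coordEq i false))

lemma measurableSet_Cset (a b : ℕ∞) (n : ℕ) : MeasurableSet (Cset a b n) :=
  (measurableSet_Aset a b n).inter (measurableSet_coordEq _ true)

lemma measurableSet_Dset (a b : ℕ∞) (n : ℕ) : MeasurableSet (Dset a b n) := by
  have h : Dset a b n = ({x | cnt (Ioi ((n:ℤ)+1)) x = a} ∩ ({x | cnt (Iio ((n:ℤ)+1)) x = b} ∩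
      ⋂ (i : ℤ), ⋂ (_ : 0 < i), ⋂ (_ : i < (n:ℤ)+1), {x : Conf | x i = false}))
      ∩ {x : Conf | x ((n:ℤ)+1) = true} := by
    ext x
    simp only [Dset, mem_setOf_eq, mem_inter_iff, mem_iInter]
  rw [h]
  exact ((measurableSet_cnt_eq _ _).inter ((measurableSet_cnt_eq _ _).inter
    (MeasurableSet.iInter fun i => MeasurableSet.iInter fun _ => MeasurableSet.iInter fun _ =>
      measurableSet_coordEq i false))).inter (measurableSet_coordEq _ true)

lemma shf_pre_Aset (a b : ℕ∞) (n : ℕ) :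
    shf (-((n:ℤ)+1)) ⁻¹' Aset a b n ∩ {x : Conf | x (-(-((n:ℤ)+1))) = true} = Dset a b n := by
  have himg1 : (fun t : ℤ => t - (-((n:ℤ)+1))) '' Ioi 0 = Ioi ((n:ℤ)+1) := by
    ext s
    simp only [mem_image, mem_Ioi]
    constructor
    · rintro ⟨t, ht, rfl⟩; omega
    · intro hs; exact ⟨s - ((n:ℤ)+1), by omega, by omega⟩
  have himg2 : (fun t : ℤ => t - (-((n:ℤ)+1))) '' Iio 0 = Iio ((n:ℤ)+1) := by
    ext s
    simp only [mem_image, mem_Iio]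
    constructor
    · rintro ⟨t, ht, rfl⟩; omega
    · intro hs; exact ⟨s - ((n:ℤ)+1), by omega, by omega⟩
  ext x
  simp only [Dset, Aset, mem_inter_iff, mem_preimage, mem_setOf_eq]
  rw [cnt_shf, cnt_shf, himg1, himg2]
  constructor
  · rintro ⟨⟨h1, h2, h3⟩, h4⟩
    refine ⟨⟨h1, h2, fun s hs1 hs2 => ?_⟩, ?_⟩
    · have h5 := h3 (s - ((n:ℤ)+1)) (by omega) (by omega)
      simp only [shf] at h5
      rw [show s - ((n:ℤ)+1) - (-((n:ℤ)+1)) = s from by omega] at h5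
      exact h5
    · rw [show -(-((n:ℤ)+1)) = (n:ℤ)+1 from by omega] at h4
      exact h4
  · rintro ⟨⟨h1, h2, h3⟩, h4⟩
    refine ⟨⟨h1, h2, fun i hi1 hi2 => ?_⟩, ?_⟩
    · show x (i - (-((n:ℤ)+1))) = false
      exact h3 (i - (-((n:ℤ)+1))) (by omega) (by omega)
    · rw [show -(-((n:ℤ)+1)) = (n:ℤ)+1 from by omega]
      exact h4

lemma union_Cset {a b : ℕ∞} (hb : b ≠ 0) :
    {x : Conf | cnt (Ioi 0) x = a ∧ cnt (Iio 0) x = b} = ⋃ n : ℕ, Cset a b n := by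
  ext x
  simp only [mem_setOf_eq, mem_iUnion]
  constructor
  · rintro ⟨h1, h2⟩
    have hne : {t : ℤ | t ∈ Iio 0 ∧ x t = true}.Nonempty := by
      rw [← Set.encard_ne_zero]
      rw [cnt] at h2
      rw [h2]; exact hb
    obtain ⟨m, ⟨hm0, hmx⟩, hmax⟩ := Int.exists_greatest_of_bdd
      (P := fun z => z ∈ Iio 0 ∧ x z = true) ⟨-1, fun z hz => by
        simp only [mem_Iio] at hz; omega⟩ hne
    simp only [mem_Iio] at hm0
    refine ⟨(-m - 1).toNat, ⟨⟨h1, h2, fun i hi1 hi2 => ?_⟩, ?_⟩⟩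
    · cases hxi : x i with
      | false => rfl
      | true =>
        exfalso
        have := hmax i ⟨by simpa [mem_Iio] using hi2, hxi⟩
        rw [Int.toNat_of_nonneg (by omega : (0:ℤ) ≤ -m - 1)] at hi1
        omega
    · rw [show -(((-m-1).toNat : ℤ) + 1) = m from by
        rw [Int.toNat_of_nonneg (by omega : (0:ℤ) ≤ -m - 1)]; omega]
      exact hmx
  · rintro ⟨n, ⟨h1, h2, -⟩, -⟩
    exact ⟨h1, h2⟩

lemma disjoint_Cset (a b : ℕ∞) : Pairwise (Function.onFun Disjoint (Cset a b)) := by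
  have key : ∀ m n : ℕ, m < n → ∀ x : Conf, x ∈ Cset a b m → x ∈ Cset a b n → False := by
    rintro m n hmn x ⟨-, hxm⟩ ⟨⟨-, -, h3⟩, -⟩
    have := h3 (-((m:ℤ)+1)) (by omega) (by omega)
    rw [hxm] at this
    simp at this
  intro m n hmn
  rcases hmn.lt_or_gt with h | h
  · exact Set.disjoint_left.mpr fun x h1 h2 => key m n h x h1 h2
  · exact Set.disjoint_left.mpr fun x h1 h2 => key n m h x h2 h1

lemma disjoint_Dset (a b : ℕ∞) : Pairwise (Function.onFun Disjoint (Dset a b)) := by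
  have key : ∀ m n : ℕ, m < n → ∀ x : Conf, x ∈ Dset a b m → x ∈ Dset a b n → False := by
    rintro m n hmn x ⟨-, hxm⟩ ⟨⟨-, -, h3⟩, -⟩
    have := h3 ((m:ℤ)+1) (by omega) (by omega)
    rw [hxm] at this
    simp at this
  intro m n hmn
  rcases hmn.lt_or_gt with h | h
  · exact Set.disjoint_left.mpr fun x h1 h2 => key m n h x h1 h2
  · exact Set.disjoint_left.mpr fun x h1 h2 => key n m h x h2 h1

lemma union_Dset (a b : ℕ∞) :
    ⋃ n : ℕ, Dset a b n = {x : Conf | cnt (Ioi 0) x = a + 1 ∧ cnt (Iic 0) x = b} := by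
  ext x
  simp only [mem_iUnion, mem_setOf_eq]
  constructor
  · rintro ⟨n, ⟨h1, h2, h3⟩, h4⟩
    constructor
    · have hset : {t : ℤ | t ∈ Ioi 0 ∧ x t = true}
          = insert ((n:ℤ)+1) {t : ℤ | t ∈ Ioi ((n:ℤ)+1) ∧ x t = true} := by
        ext t
        simp only [mem_setOf_eq, mem_insert_iff, mem_Ioi]
        constructor
        · rintro ⟨ht, hxt⟩
          by_cases hc : t = (n:ℤ)+1
          · exact Or.inl hc
          · refine Or.inr ⟨?_, hxt⟩
            by_contra hc2
            have := h3 t ht (by omega)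
            rw [hxt] at this
            simp at this
        · rintro (rfl | ⟨ht, hxt⟩)
          · exact ⟨by omega, h4⟩
          · exact ⟨by omega, hxt⟩
      rw [cnt, hset, Set.encard_insert_of_notMem (by simp [mem_Ioi]), ← cnt, h1]
    · have hset : {t : ℤ | t ∈ Iic 0 ∧ x t = true} = {t : ℤ | t ∈ Iio ((n:ℤ)+1) ∧ x t = true} := by
        ext t
        simp only [mem_setOf_eq, mem_Iic, mem_Iio]
        constructor
        · rintro ⟨ht, hxt⟩; exact ⟨by omega, hxt⟩
        · rintro ⟨ht, hxt⟩
          refine ⟨?_, hxt⟩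
          by_contra hc
          have := h3 t (by omega) (by omega)
          rw [hxt] at this
          simp at this
      rw [cnt, hset, ← cnt, h2]
  · rintro ⟨h1, h2⟩
    have hne : {t : ℤ | t ∈ Ioi 0 ∧ x t = true}.Nonempty := by
      rw [← Set.encard_ne_zero, ← cnt, h1]
      intro hc
      rcases (add_eq_zero.mp hc) with ⟨-, h1⟩
      exact one_ne_zero h1
    obtain ⟨j0, ⟨hj0pos, hj0x⟩, hmin⟩ := Int.exists_least_of_bdd
      (P := fun z => z ∈ Ioi 0 ∧ x z = true) ⟨1, fun z hz => by
        simp only [mem_Ioi] at hz; omega⟩ hne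
    simp only [mem_Ioi] at hj0pos
    have hkey : ((j0-1).toNat : ℤ) + 1 = j0 := by
      rw [Int.toNat_of_nonneg (by omega : (0:ℤ) ≤ j0 - 1)]; omega
    refine ⟨(j0-1).toNat, ⟨?_, ?_, ?_⟩, ?_⟩
    · rw [hkey]
      have hset : {t : ℤ | t ∈ Ioi 0 ∧ x t = true}
          = insert j0 {t : ℤ | t ∈ Ioi j0 ∧ x t = true} := by
        ext t
        simp only [mem_setOf_eq, mem_insert_iff, mem_Ioi]
        constructor
        · rintro ⟨ht, hxt⟩
          by_cases hc : t = j0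
          · exact Or.inl hc
          · have := hmin t ⟨by simpa [mem_Ioi] using ht, hxt⟩
            exact Or.inr ⟨by omega, hxt⟩
        · rintro (rfl | ⟨ht, hxt⟩)
          · exact ⟨hj0pos, hj0x⟩
          · exact ⟨by omega, hxt⟩
      rw [cnt, hset, Set.encard_insert_of_notMem (by simp [mem_Ioi])] at h1
      rw [cnt]
      exact WithTop.add_right_cancel (by simp : (1:ℕ∞) ≠ ⊤) h1
    · rw [hkey]
      have hset : {t : ℤ | t ∈ Iio j0 ∧ x t = true} = {t : ℤ | t ∈ Iic 0 ∧ x t = true} := by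
        ext t
        simp only [mem_setOf_eq, mem_Iio, mem_Iic]
        constructor
        · rintro ⟨ht, hxt⟩
          refine ⟨?_, hxt⟩
          by_contra hc
          have := hmin t ⟨by simp [mem_Ioi]; omega, hxt⟩
          omega
        · rintro ⟨ht, hxt⟩; exact ⟨by omega, hxt⟩
      rw [cnt, hset, ← cnt, h2]
    · intro s hs1 hs2
      rw [hkey] at hs2
      cases hxs : x s with
      | false => rfl
      | true =>
        exfalso
        have := hmin s ⟨by simpa [mem_Ioi] using hs1, hxs⟩
        omega
    · rw [hkey]
      exact hj0x

lemma L1 (μ : Measure Conf) [IsProbabilityMeasure μ]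
    (H1 : μ {x : Conf | x 0 = true} = 1)
    (H2 : ∀ (k : ℤ) (A : Set Conf), MeasurableSet A →
      μ (A ∩ {x : Conf | x k = true}) = μ (shf k ⁻¹' A ∩ {x : Conf | x (-k) = true}))
    (a b : ℕ∞) (hb : b ≠ 0) :
    μ {x : Conf | cnt (Ioi 0) x = a ∧ cnt (Iio 0) x = b}
      = μ {x : Conf | cnt (Ioi 0) x = a + 1 ∧ cnt (Iio 0) x = b - 1} := by
  have hnull : μ {x : Conf | x 0 = true}ᶜ = 0 := by
    rw [measure_compl (measurableSet_coordEq 0 true) (measure_ne_top μ _), H1, measure_univ]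
    simp
  have hCD : ∀ n : ℕ, μ (Cset a b n) = μ (Dset a b n) := by
    intro n
    have h := H2 (-((n:ℤ)+1)) (Aset a b n) (measurableSet_Aset a b n)
    rw [shf_pre_Aset] at h
    exact h
  have hIic : ∀ x : Conf, x 0 = true →
      ({t : ℤ | t ∈ Iic 0 ∧ x t = true} = insert 0 {t : ℤ | t ∈ Iio 0 ∧ x t = true}) := by
    intro x h0
    ext t
    simp only [mem_setOf_eq, mem_Iic, mem_Iio, mem_insert_iff]
    constructor
    · rintro ⟨ht, hxt⟩
      by_cases hc : t = 0
      · exact Or.inl hc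
      · exact Or.inr ⟨by omega, hxt⟩
    · rintro (rfl | ⟨ht, hxt⟩)
      · exact ⟨le_refl 0, h0⟩
      · exact ⟨by omega, hxt⟩
  calc μ {x : Conf | cnt (Ioi 0) x = a ∧ cnt (Iio 0) x = b}
      = μ (⋃ n : ℕ, Cset a b n) := by rw [union_Cset hb]
    _ = ∑' n : ℕ, μ (Cset a b n) := measure_iUnion (disjoint_Cset a b) (measurableSet_Cset a b)
    _ = ∑' n : ℕ, μ (Dset a b n) := tsum_congr hCD
    _ = μ (⋃ n : ℕ, Dset a b n) :=
        (measure_iUnion (disjoint_Dset a b) (measurableSet_Dset a b)).symm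
    _ = μ {x : Conf | cnt (Ioi 0) x = a + 1 ∧ cnt (Iic 0) x = b} := by rw [union_Dset]
    _ = μ {x : Conf | cnt (Ioi 0) x = a + 1 ∧ cnt (Iio 0) x = b - 1} := by
        rw [← measure_inter_ae μ hnull {x : Conf | cnt (Ioi 0) x = a + 1 ∧ cnt (Iic 0) x = b},
          ← measure_inter_ae μ hnull
            {x : Conf | cnt (Ioi 0) x = a + 1 ∧ cnt (Iio 0) x = b - 1}]
        congr 1
        ext x
        simp only [mem_inter_iff, mem_setOf_eq]
        constructor
        · rintro ⟨⟨h1, h2⟩, h0⟩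
          refine ⟨⟨h1, ?_⟩, h0⟩
          rw [cnt, hIic x h0, Set.encard_insert_of_notMem
            (by rintro ⟨h, -⟩; exact absurd h (by simp)), ← cnt] at h2
          exact (enat_succ_eq_iff hb).mp h2
        · rintro ⟨⟨h1, h2⟩, h0⟩
          refine ⟨⟨h1, ?_⟩, h0⟩
          rw [cnt, hIic x h0, Set.encard_insert_of_notMem
            (by rintro ⟨h, -⟩; exact absurd h (by simp)), ← cnt]
          exact (enat_succ_eq_iff hb).mpr h2

lemma measurableSet_pm (c d : ℕ∞) :
    MeasurableSet {x : Conf | cnt (Ioi 0) x = c ∧ cnt (Iio 0) x = d} := by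
  have h : {x : Conf | cnt (Ioi 0) x = c ∧ cnt (Iio 0) x = d}
      = {x : Conf | cnt (Ioi 0) x = c} ∩ {x : Conf | cnt (Iio 0) x = d} := rfl
  rw [h]
  exact (measurableSet_cnt_eq _ _).inter (measurableSet_cnt_eq _ _)

lemma downstream (μ : Measure Conf) [IsProbabilityMeasure μ]
    (H1 : μ {x : Conf | x 0 = true} = 1)
    (H2 : ∀ (k : ℤ) (A : Set Conf), MeasurableSet A →
      μ (A ∩ {x : Conf | x k = true}) = μ (shf k ⁻¹' A ∩ {x : Conf | x (-k) = true}))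
    (k l : ℕ) :
    (μ {x : Conf | cnt (Ioi 0) x = (k:ℕ∞) ∧ cnt (Iio 0) x = (l:ℕ∞)}
      = μ {x : Conf | cnt (Ioi 0) x = ((k+l:ℕ):ℕ∞)}
        - μ {x : Conf | cnt (Ioi 0) x = ((k+l+1:ℕ):ℕ∞)})
    ∧ (μ {x : Conf | cnt (Ioi 0) x = (k:ℕ∞) ∧ cnt (Iio 0) x = (l:ℕ∞)}
      = μ {x : Conf | cnt (Iio 0) x = ((k+l:ℕ):ℕ∞)}
        - μ {x : Conf | cnt (Iio 0) x = ((k+l+1:ℕ):ℕ∞)}) := by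
  set G : ℕ → ℝ≥0∞ := fun c =>
    μ {x : Conf | cnt (Ioi 0) x = (c:ℕ∞) ∧ cnt (Iio 0) x = ((0:ℕ):ℕ∞)} with hGdef
  have hcoesub : ∀ m : ℕ, ((m+1:ℕ):ℕ∞) - 1 = (m:ℕ∞) := by
    intro m
    rw [show (1:ℕ∞) = ((1:ℕ):ℕ∞) from rfl, ← ENat.coe_sub]
    norm_num
  have hcoeadd : ∀ m : ℕ, (m:ℕ∞) + 1 = ((m+1:ℕ):ℕ∞) := by
    intro m; push_cast; ring
  -- main reduction: μ{k,l} = G (k+l)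
  have hG : ∀ l k : ℕ,
      μ {x : Conf | cnt (Ioi 0) x = (k:ℕ∞) ∧ cnt (Iio 0) x = (l:ℕ∞)} = G (k+l) := by
    intro l
    induction l with
    | zero => intro k; rfl
    | succ l ih =>
      intro k
      have h := L1 μ H1 H2 (k:ℕ∞) ((l+1:ℕ):ℕ∞) (by exact_mod_cast Nat.succ_ne_zero l)
      rw [hcoeadd k, hcoesub l] at h
      rw [h, ih (k+1)]
      congr 1
      omega
  -- vanishing of the mixed infinite events
  have hinf1 : ∀ m : ℕ,
      μ {x : Conf | cnt (Ioi 0) x = (m:ℕ∞) ∧ cnt (Iio 0) x = (⊤:ℕ∞)} = 0 := by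
    have hstep : ∀ m : ℕ,
        μ {x : Conf | cnt (Ioi 0) x = (m:ℕ∞) ∧ cnt (Iio 0) x = (⊤:ℕ∞)}
        = μ {x : Conf | cnt (Ioi 0) x = ((m+1:ℕ):ℕ∞) ∧ cnt (Iio 0) x = (⊤:ℕ∞)} := by
      intro m
      have h := L1 μ H1 H2 (m:ℕ∞) ⊤ (by simp)
      rw [ENat.top_sub_one, hcoeadd m] at h
      exact h
    have hconst : ∀ m : ℕ,
        μ {x : Conf | cnt (Ioi 0) x = (m:ℕ∞) ∧ cnt (Iio 0) x = (⊤:ℕ∞)}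
        = μ {x : Conf | cnt (Ioi 0) x = ((0:ℕ):ℕ∞) ∧ cnt (Iio 0) x = (⊤:ℕ∞)} := by
      intro m
      induction m with
      | zero => rfl
      | succ m ih => rw [← hstep m, ih]
    have hdisj : Pairwise (Function.onFun Disjoint
        (fun m : ℕ => {x : Conf | cnt (Ioi 0) x = (m:ℕ∞) ∧ cnt (Iio 0) x = (⊤:ℕ∞)})) := by
      intro m n hmn
      refine Set.disjoint_left.mpr fun x h1 h2 => hmn ?_
      have := h1.1.symm.trans h2.1
      exact_mod_cast this
    have hU := measure_iUnion (μ := μ) hdisj (fun m => measurableSet_pm _ _)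
    have h0 : μ {x : Conf | cnt (Ioi 0) x = ((0:ℕ):ℕ∞) ∧ cnt (Iio 0) x = (⊤:ℕ∞)} = 0 := by
      by_contra hf
      have htop : (∑' m : ℕ, μ {x : Conf | cnt (Ioi 0) x = (m:ℕ∞) ∧ cnt (Iio 0) x = (⊤:ℕ∞)})
          = ⊤ := by
        rw [tsum_congr hconst]
        exact ENNReal.tsum_const_eq_top_of_ne_zero hf
      rw [htop] at hU
      exact (measure_ne_top μ _) hU
    intro m
    rw [hconst m, h0]
  have hinf2 : ∀ m : ℕ,
      μ {x : Conf | cnt (Ioi 0) x = (⊤:ℕ∞) ∧ cnt (Iio 0) x = (m:ℕ∞)} = 0 := by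
    have hstep : ∀ m : ℕ,
        μ {x : Conf | cnt (Ioi 0) x = (⊤:ℕ∞) ∧ cnt (Iio 0) x = ((m+1:ℕ):ℕ∞)}
        = μ {x : Conf | cnt (Ioi 0) x = (⊤:ℕ∞) ∧ cnt (Iio 0) x = (m:ℕ∞)} := by
      intro m
      have h := L1 μ H1 H2 ⊤ ((m+1:ℕ):ℕ∞) (by exact_mod_cast Nat.succ_ne_zero m)
      rw [top_add, hcoesub m] at h
      exact h
    have hconst : ∀ m : ℕ,
        μ {x : Conf | cnt (Ioi 0) x = (⊤:ℕ∞) ∧ cnt (Iio 0) x = (m:ℕ∞)}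
        = μ {x : Conf | cnt (Ioi 0) x = (⊤:ℕ∞) ∧ cnt (Iio 0) x = ((0:ℕ):ℕ∞)} := by
      intro m
      induction m with
      | zero => rfl
      | succ m ih => rw [hstep m, ih]
    have hdisj : Pairwise (Function.onFun Disjoint
        (fun m : ℕ => {x : Conf | cnt (Ioi 0) x = (⊤:ℕ∞) ∧ cnt (Iio 0) x = (m:ℕ∞)})) := by
      intro m n hmn
      refine Set.disjoint_left.mpr fun x h1 h2 => hmn ?_
      have := h1.2.symm.trans h2.2
      exact_mod_cast this
    have hU := measure_iUnion (μ := μ) hdisj (fun m => measurableSet_pm _ _)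
    have h0 : μ {x : Conf | cnt (Ioi 0) x = (⊤:ℕ∞) ∧ cnt (Iio 0) x = ((0:ℕ):ℕ∞)} = 0 := by
      by_contra hf
      have htop : (∑' m : ℕ, μ {x : Conf | cnt (Ioi 0) x = (⊤:ℕ∞) ∧ cnt (Iio 0) x = (m:ℕ∞)})
          = ⊤ := by
        rw [tsum_congr hconst]
        exact ENNReal.tsum_const_eq_top_of_ne_zero hf
      rw [htop] at hU
      exact (measure_ne_top μ _) hU
    intro m
    rw [hconst m, h0]
  -- decomposition of the marginals
  have hdec1 : ∀ m : ℕ, μ {x : Conf | cnt (Ioi 0) x = (m:ℕ∞)} = ∑' c : ℕ, G (m + c) := by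
    intro m
    have hsplit : {x : Conf | cnt (Ioi 0) x = (m:ℕ∞)}
        = {x : Conf | cnt (Ioi 0) x = (m:ℕ∞) ∧ cnt (Iio 0) x = (⊤:ℕ∞)}
          ∪ ⋃ c : ℕ, {x : Conf | cnt (Ioi 0) x = (m:ℕ∞) ∧ cnt (Iio 0) x = (c:ℕ∞)} := by
      ext x
      simp only [mem_setOf_eq, mem_union, mem_iUnion]
      constructor
      · intro h
        cases hc : cnt (Iio 0) x with
        | top => exact Or.inl ⟨h, rfl⟩
        | coe c => exact Or.inr ⟨c, h, rfl⟩
      · rintro (⟨h, -⟩ | ⟨c, h, -⟩) <;> exact h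
    have hdisj2 : Disjoint {x : Conf | cnt (Ioi 0) x = (m:ℕ∞) ∧ cnt (Iio 0) x = (⊤:ℕ∞)}
        (⋃ c : ℕ, {x : Conf | cnt (Ioi 0) x = (m:ℕ∞) ∧ cnt (Iio 0) x = (c:ℕ∞)}) := by
      refine Set.disjoint_left.mpr fun x h1 h2 => ?_
      simp only [mem_iUnion, mem_setOf_eq] at h2
      obtain ⟨c, -, hc⟩ := h2
      rw [h1.2] at hc
      exact (ENat.coe_ne_top c) hc.symm
    have hdisjU : Pairwise (Function.onFun Disjoint
        (fun c : ℕ => {x : Conf | cnt (Ioi 0) x = (m:ℕ∞) ∧ cnt (Iio 0) x = (c:ℕ∞)})) := by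
      intro c d hcd
      refine Set.disjoint_left.mpr fun x h1 h2 => hcd ?_
      have := h1.2.symm.trans h2.2
      exact_mod_cast this
    rw [hsplit, measure_union hdisj2 (MeasurableSet.iUnion fun c => measurableSet_pm _ _),
      hinf1 m, zero_add, measure_iUnion hdisjU (fun c => measurableSet_pm _ _)]
    exact tsum_congr fun c => hG c m
  have hdec2 : ∀ m : ℕ, μ {x : Conf | cnt (Iio 0) x = (m:ℕ∞)} = ∑' c : ℕ, G (m + c) := by
    intro m
    have hsplit : {x : Conf | cnt (Iio 0) x = (m:ℕ∞)}
        = {x : Conf | cnt (Ioi 0) x = (⊤:ℕ∞) ∧ cnt (Iio 0) x = (m:ℕ∞)}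
          ∪ ⋃ c : ℕ, {x : Conf | cnt (Ioi 0) x = (c:ℕ∞) ∧ cnt (Iio 0) x = (m:ℕ∞)} := by
      ext x
      simp only [mem_setOf_eq, mem_union, mem_iUnion]
      constructor
      · intro h
        cases hc : cnt (Ioi 0) x with
        | top => exact Or.inl ⟨rfl, h⟩
        | coe c => exact Or.inr ⟨c, rfl, h⟩
      · rintro (⟨-, h⟩ | ⟨c, -, h⟩) <;> exact h
    have hdisj2 : Disjoint {x : Conf | cnt (Ioi 0) x = (⊤:ℕ∞) ∧ cnt (Iio 0) x = (m:ℕ∞)}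
        (⋃ c : ℕ, {x : Conf | cnt (Ioi 0) x = (c:ℕ∞) ∧ cnt (Iio 0) x = (m:ℕ∞)}) := by
      refine Set.disjoint_left.mpr fun x h1 h2 => ?_
      simp only [mem_iUnion, mem_setOf_eq] at h2
      obtain ⟨c, hc, -⟩ := h2
      rw [h1.1] at hc
      exact (ENat.coe_ne_top c) hc.symm
    have hdisjU : Pairwise (Function.onFun Disjoint
        (fun c : ℕ => {x : Conf | cnt (Ioi 0) x = (c:ℕ∞) ∧ cnt (Iio 0) x = (m:ℕ∞)})) := by
      intro c d hcd
      refine Set.disjoint_left.mpr fun x h1 h2 => hcd ?_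
      have := h1.1.symm.trans h2.1
      exact_mod_cast this
    rw [hsplit, measure_union hdisj2 (MeasurableSet.iUnion fun c => measurableSet_pm _ _),
      hinf2 m, zero_add, measure_iUnion hdisjU (fun c => measurableSet_pm _ _)]
    refine tsum_congr fun c => ?_
    rw [hG m c]
    congr 1
    omega
  -- telescoping
  have htel : ∀ m : ℕ, (∑' c : ℕ, G (m + c)) = G m + ∑' c : ℕ, G ((m+1) + c) := by
    intro m
    rw [tsum_eq_zero_add' ENNReal.summable]
    congr 1
    exact tsum_congr fun c => congrArg G (by omega)
  have hne : ∀ m : ℕ, (∑' c : ℕ, G ((m+1) + c)) ≠ ⊤ := by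
    intro m
    rw [← hdec1 (m+1)]
    exact measure_ne_top μ _
  have hfinal : ∀ m : ℕ, (∑' c : ℕ, G (m + c)) - (∑' c : ℕ, G ((m+1) + c)) = G m := by
    intro m
    rw [htel m]
    exact ENNReal.add_sub_cancel_right (hne m)
  constructor
  · rw [hG l k, hdec1 (k+l), hdec1 (k+l+1), hfinal (k+l)]
  · rw [hG l k, hdec2 (k+l), hdec2 (k+l+1), hfinal (k+l)]

/-- Theorem 3.2(a), Equation (3.6): under Assumption 1, for `k, ℓ ∈ ℕ₀`,
`P(S₊ⁱ = k, S₋ⁱ = ℓ) = P(S₊ⁱ = k + ℓ) - P(S₊ⁱ = k + ℓ + 1)`, and the same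
identity with `S₊ⁱ` replaced by `S₋ⁱ` on the right-hand side. -/
theorem cluster_size_eq_eq
    {Ω : Type*} [MeasurableSpace Ω] (P : Measure Ω) [IsProbabilityMeasure P]
    (I : ℤ → Ω → Bool) (hI : ∀ t, Measurable (I t))
    {Ωn : ℕ → Type*} [∀ n, MeasurableSpace (Ωn n)]
    (Pn : ∀ n, Measure (Ωn n)) (hPn : ∀ n, IsProbabilityMeasure (Pn n))
    (In : ∀ n, ℤ → Ωn n → Bool) (hIn : ∀ n t, Measurable (In n t))
    -- `P(I₀ⁿ = 1) > 0` for all `n`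
    (hpos : ∀ n, 0 < Pn n {ω | In n 0 ω = true})
    -- stationarity of each `(Iₜⁿ)ₜ`
    (hstat : ∀ n (F : Finset ℤ) (ε : ℤ → Bool) (k : ℤ),
      Pn n {ω | ∀ t ∈ F, In n t ω = ε t} = Pn n {ω | ∀ t ∈ F, In n (t + k) ω = ε t})
    -- convergence of the conditional finite-dimensional distributions
    (hconv : ∀ (F : Finset ℤ) (ε : ℤ → Bool),
      Tendsto (fun n =>
          Pn n ({ω | ∀ t ∈ F, In n t ω = ε t} ∩ {ω | In n 0 ω = true})
            / Pn n {ω | In n 0 ω = true}) atTop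
        (nhds (P {ω | ∀ t ∈ F, I t ω = ε t})))

    (k l : ℕ) :
    P {ω | SplusFn I ω = (k : ℕ∞) ∧ SminusFn I ω = (l : ℕ∞)}
        = P {ω | SplusFn I ω = ((k + l : ℕ) : ℕ∞)}
          - P {ω | SplusFn I ω = ((k + l + 1 : ℕ) : ℕ∞)}
    ∧ P {ω | SplusFn I ω = (k : ℕ∞) ∧ SminusFn I ω = (l : ℕ∞)}
        = P {ω | SminusFn I ω = ((k + l : ℕ) : ℕ∞)}
          - P {ω | SminusFn I ω = ((k + l + 1 : ℕ) : ℕ∞)} := by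
  classical
  set X : Ω → Conf := fun ω t => I t ω with hXdef
  have hX : Measurable X := measurable_pi_lambda _ hI
  set μ : Measure Conf := P.map X with hμdef
  have hμprob : IsProbabilityMeasure μ := Measure.isProbabilityMeasure_map hX.aemeasurable
  have hZ0 : ∀ n, Pn n {ω | In n 0 ω = true} ≠ 0 := fun n => (hpos n).ne'
  have hZt : ∀ n, Pn n {ω | In n 0 ω = true} ≠ ⊤ := fun n => measure_ne_top _ _
  have habsorb : ∀ n (F : Finset ℤ) (ε : ℤ → Bool), 0 ∈ F → ε 0 = true →
      {ω | ∀ t ∈ F, In n t ω = ε t} ∩ {ω | In n 0 ω = true}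
        = {ω | ∀ t ∈ F, In n t ω = ε t} := by
    intro n F ε h0 hε
    refine inter_eq_left.mpr fun ω hω => ?_
    show In n 0 ω = true
    rw [hω 0 h0, hε]
  -- the key shift-invariance identity for the limit measure, on cylinders
  have KEY : ∀ (F : Finset ℤ) (ε : ℤ → Bool) (c : ℤ), 0 ∈ F → ε 0 = true →
      c ∈ F → ε c = true →
      P {ω | ∀ t ∈ F, I t ω = ε t}
        = P {ω | ∀ t ∈ F.image (· - c), I t ω = ε (t + c)} := by
    intro F ε c h0 hε0 hc hεc
    have h0' : (0:ℤ) ∈ F.image (· - c) := Finset.mem_image.mpr ⟨c, hc, by omega⟩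
    have hε0' : ε (0 + c) = true := by rwa [zero_add]
    have heq : (fun n => Pn n ({ω | ∀ t ∈ F.image (· - c), In n t ω = ε (t + c)}
            ∩ {ω | In n 0 ω = true}) / Pn n {ω | In n 0 ω = true})
        = (fun n => Pn n ({ω | ∀ t ∈ F, In n t ω = ε t} ∩ {ω | In n 0 ω = true})
            / Pn n {ω | In n 0 ω = true}) := by
      funext n
      rw [habsorb n F ε h0 hε0, habsorb n _ _ h0' hε0']
      congr 1
      rw [hstat n F ε (-c)]
      have hsets : {ω | ∀ t ∈ F, In n (t + -c) ω = ε t}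
          = {ω | ∀ t ∈ F.image (· - c), In n t ω = ε (t + c)} := by
        ext ω
        simp only [mem_setOf_eq, Finset.mem_image]
        constructor
        · intro h s hs
          obtain ⟨t, ht, rfl⟩ := hs
          have h2 := h t ht
          rw [show t + -c = t - c from by omega] at h2
          rw [h2]
          congr 1
          omega
        · intro h t ht
          have h2 := h (t - c) ⟨t, ht, rfl⟩
          rw [show t - c + c = t from by omega] at h2
          rw [show t + -c = t - c from by omega]
          exact h2
      rw [hsets]
    exact tendsto_nhds_unique (heq ▸ hconv F ε)
      (hconv (F.image (· - c)) (fun t => ε (t + c)))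
  -- the limit process has a one at the origin a.s.
  have hone : P {ω | I 0 ω = true} = 1 := by
    have h1 := hconv {0} (fun _ => true)
    have hseq : (fun n => Pn n ({ω | ∀ t ∈ ({0}:Finset ℤ), In n t ω = (fun _ => true) t}
            ∩ {ω | In n 0 ω = true}) / Pn n {ω | In n 0 ω = true})
        = fun _ => (1:ℝ≥0∞) := by
      funext n
      have hset : {ω | ∀ t ∈ ({0}:Finset ℤ), In n t ω = (fun _ => true) t}
          = {ω | In n 0 ω = true} := by
        ext ω; simp
      rw [hset, inter_self]
      exact ENNReal.div_self (hZ0 n) (hZt n)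
    rw [hseq] at h1
    have h2 := tendsto_nhds_unique h1 tendsto_const_nhds
    have hset2 : {ω | ∀ t ∈ ({0}:Finset ℤ), I t ω = true} = {ω | I 0 ω = true} := by
      ext ω; simp
    rw [hset2] at h2
    exact h2.symm ▸ rfl
  have hμcyl : ∀ (F : Finset ℤ) (ε : ℤ → Bool),
      μ (cylE F ε) = P {ω | ∀ t ∈ F, I t ω = ε t} := by
    intro F ε
    rw [hμdef, Measure.map_apply hX (measurableSet_cylE F ε)]
    rfl
  have H1 : μ {x : Conf | x 0 = true} = 1 := by
    rw [hμdef, Measure.map_apply hX (measurableSet_coordEq 0 true)]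
    exact hone
  have μKEY : ∀ (F : Finset ℤ) (ε : ℤ → Bool) (c : ℤ), 0 ∈ F → ε 0 = true →
      c ∈ F → ε c = true →
      μ (cylE F ε) = μ (cylE (F.image (· - c)) (fun s => ε (s + c))) := by
    intro F ε c h0 hε0 hc hεc
    rw [hμcyl, hμcyl]
    exact KEY F ε c h0 hε0 hc hεc
  have hnull : μ {x : Conf | x 0 = true}ᶜ = 0 := by
    rw [measure_compl (measurableSet_coordEq 0 true) (measure_ne_top μ _), H1, measure_univ]
    simp
  -- Palm shift-invariance, extended to all measurable sets
  have H2 : ∀ (c : ℤ) (A : Set Conf), MeasurableSet A →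
      μ (A ∩ {x : Conf | x c = true}) = μ (shf c ⁻¹' A ∩ {x : Conf | x (-c) = true}) := by
    intro c
    set ν : Measure Conf := μ.restrict {x : Conf | x c = true} with hν
    set ρ : Measure Conf := (μ.restrict {x : Conf | x (-c) = true}).map (shf c) with hρ
    have hνA : ∀ A : Set Conf, MeasurableSet A →
        ν A = μ (A ∩ {x : Conf | x c = true}) := fun A hA => Measure.restrict_apply hA
    have hρA : ∀ A : Set Conf, MeasurableSet A →
        ρ A = μ (shf c ⁻¹' A ∩ {x : Conf | x (-c) = true}) := by
      intro A hA
      rw [hρ, Measure.map_apply (measurable_shf c) hA,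
        Measure.restrict_apply ((measurable_shf c) hA)]
    have hpre_k : shf c ⁻¹' {x : Conf | x c = true} = {x : Conf | x 0 = true} := by
      ext x
      show x (c - c) = true ↔ x 0 = true
      rw [sub_self]
    have hpre_0 : shf c ⁻¹' {x : Conf | x 0 = true} = {x : Conf | x (-c) = true} := by
      ext x
      show x (0 - c) = true ↔ x (-c) = true
      rw [zero_sub]
    have hagree : ∀ s ∈ cylFam, ν s = ρ s := by
      rintro _ ⟨F, ε, rfl⟩
      rw [hνA _ (measurableSet_cylE F ε), hρA _ (measurableSet_cylE F ε),
        ← measure_inter_ae μ hnull (cylE F ε ∩ {x | x c = true}),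
        ← measure_inter_ae μ hnull (shf c ⁻¹' cylE F ε ∩ {x | x (-c) = true})]
      have hrearr : shf c ⁻¹' cylE F ε ∩ {x : Conf | x (-c) = true} ∩ {x : Conf | x 0 = true}
          = shf c ⁻¹' (cylE F ε ∩ {x : Conf | x c = true} ∩ {x : Conf | x 0 = true}) := by
        rw [preimage_inter, preimage_inter, hpre_k, hpre_0]
        ext x
        simp only [mem_inter_iff, mem_preimage, mem_setOf_eq]
        tauto
      rw [hrearr]
      by_cases hgood : ((0:ℤ) ∈ F → ε 0 = true) ∧ (c ∈ F → ε c = true)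
      · set F' : Finset ℤ := insert 0 (insert c F) with hF'
        set ε' : ℤ → Bool := Function.update (Function.update ε c true) 0 true with hε'
        have hε'0 : ε' 0 = true := Function.update_self _ _ _
        have hε'k : ε' c = true := by
          by_cases hk0 : c = 0
          · rw [hk0]; exact hε'0
          · rw [hε', Function.update_of_ne hk0, Function.update_self]
        have hinner : cylE F ε ∩ {x : Conf | x c = true} ∩ {x : Conf | x 0 = true}
            = cylE F' ε' := by
          ext x
          simp only [cylE, mem_inter_iff, mem_setOf_eq, hF', Finset.mem_insert]
          constructor
          · rintro ⟨⟨hF, hxk⟩, hx0⟩ t ht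
            rcases ht with rfl | rfl | ht
            · rw [hx0, hε'0]
            · rw [hxk, hε'k]
            · by_cases ht0 : t = 0
              · subst ht0; rw [hx0, hε'0]
              · by_cases htk : t = c
                · subst htk; rw [hxk, hε'k]
                · rw [hF t ht, hε', Function.update_of_ne ht0, Function.update_of_ne htk]
          · intro h
            have hx0 : x 0 = true := by rw [h 0 (Or.inl rfl), hε'0]
            have hxk : x c = true := by rw [h c (Or.inr (Or.inl rfl)), hε'k]
            refine ⟨⟨fun t ht => ?_, hxk⟩, hx0⟩
            by_cases ht0 : t = 0
            · subst ht0; rw [hx0, hgood.1 ht]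
            · by_cases htk : t = c
              · subst htk; rw [hxk, hgood.2 ht]
              · rw [h t (Or.inr (Or.inr ht)), hε', Function.update_of_ne ht0,
                  Function.update_of_ne htk]
        rw [hinner, shf_preimage_cylE]
        exact μKEY F' ε' c (Finset.mem_insert_self 0 _) hε'0
          (Finset.mem_insert_of_mem (Finset.mem_insert_self c F)) hε'k
      · have hempty : cylE F ε ∩ {x : Conf | x c = true} ∩ {x : Conf | x 0 = true} = ∅ := by
          rw [not_and_or] at hgood
          ext x
          simp only [cylE, mem_inter_iff, mem_setOf_eq, mem_empty_iff_false, iff_false]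
          rintro ⟨⟨hF, hxk⟩, hx0⟩
          rcases hgood with h | h
          · push_neg at h
            obtain ⟨h0F, hε0⟩ := h
            exact hε0 (by rw [← hF 0 h0F, hx0])
          · push_neg at h
            obtain ⟨hcF, hεc⟩ := h
            exact hεc (by rw [← hF c hcF, hxk])
        rw [hempty]
        simp
    have huniv : ν univ = ρ univ := by
      have h1 : ν univ = μ {x : Conf | x c = true} := by
        rw [hν, Measure.restrict_apply_univ]
      have h2 : ρ univ = μ {x : Conf | x (-c) = true} := by
        rw [hρ, Measure.map_apply (measurable_shf c) MeasurableSet.univ, preimage_univ,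
          Measure.restrict_apply_univ]
      have hc : cylE {c} (fun _ => true) = {x : Conf | x c = true} := by
        ext x; simp [cylE]
      have h3 := hagree (cylE {c} (fun _ => true)) ⟨{c}, fun _ => true, rfl⟩
      rw [hνA _ (measurableSet_cylE _ _), hρA _ (measurableSet_cylE _ _), hc, inter_self] at h3
      rw [hpre_k] at h3
      rw [h1, h2, h3, inter_comm]
      exact measure_inter_ae μ hnull _
    have hext : ν = ρ :=
      ext_of_generate_finite cylFam generateFrom_cylFam isPiSystem_cylFam hagree huniv
    intro A hA
    rw [← hνA A hA, hext, hρA A hA]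
  obtain ⟨goal1, goal2⟩ := downstream μ H1 H2 k l
  have htrans : ∀ (cc d : ℕ∞), P {ω | SplusFn I ω = cc ∧ SminusFn I ω = d}
      = μ {x : Conf | cnt (Ioi 0) x = cc ∧ cnt (Iio 0) x = d} := by
    intro cc d
    rw [hμdef, Measure.map_apply hX (measurableSet_pm cc d)]
    rfl
  have htransp : ∀ (cc : ℕ∞), P {ω | SplusFn I ω = cc} = μ {x : Conf | cnt (Ioi 0) x = cc} := by
    intro cc
    rw [hμdef, Measure.map_apply hX (measurableSet_cnt_eq (Ioi 0) cc)]
    rfl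
  have htransm : ∀ (cc : ℕ∞), P {ω | SminusFn I ω = cc} = μ {x : Conf | cnt (Iio 0) x = cc} := by
    intro cc
    rw [hμdef, Measure.map_apply hX (measurableSet_cnt_eq (Iio 0) cc)]
    rfl
  constructor
  · rw [htrans, htransp, htransp]
    exact goal1
  · rw [htrans, htransm, htransm]
    exact goal2
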